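/- arXiv:1606.08532 — 3 statements merged into one kernel-verified Lean document; each statement's English description precedes it below -/
import Mathlib

section
/- Let G be a theta graph on n vertices and let A ∪ B be a partition of the vertex set of G into two non-empty subsets such that G is not a bipartite graph with bipartition classes A and B. Then for every integer r with 1 ≤ r < n, G contains a path of length r (i.e., with r edges) with one endpoint in A and the other endpoint in B. -/
open SimpleGraph

namespace ThetaAux

variable {V : Type*} {G : SimpleGraph V}

lemma getVert_support_getElem {u v : V} (w : G.Walk u v) :
    ∀ (i : ℕ) (h : i < w.support.length), w.getVert i = w.support[i] := by
  induction w with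
  | nil => intro i h; simp [Walk.support_nil] at h; subst h; simp [Walk.getVert_zero]
  | cons a p ih =>
    intro i h
    cases i with
    | zero => simp [Walk.getVert_zero]
    | succ j =>
      simp only [Walk.support_cons, List.getElem_cons_succ]
      rw [Walk.getVert_cons_succ]
      exact ih j (by simpa [Walk.support_cons, List.length_cons] using h)

lemma sq_getVert_mem_edges {u v : V} (w : G.Walk u v) :
    ∀ i, i < w.length → s(w.getVert i, w.getVert (i+1)) ∈ w.edges := by
  induction w with
  | nil => intro i h; simp at h
  | cons a p ih =>
    intro i h
    cases i with
    | zero =>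
      simp [Walk.edges_cons, Walk.getVert_zero, Walk.getVert_cons_succ]
    | succ j =>
      simp only [Walk.getVert_cons_succ, Walk.edges_cons, List.mem_cons]
      exact Or.inr (ih j (by simpa [Walk.length_cons] using h))

lemma mem_edges_getVert {u v : V} (w : G.Walk u v) :
    ∀ f ∈ w.edges, ∃ i, i < w.length ∧ f = s(w.getVert i, w.getVert (i+1)) := by
  induction w with
  | nil => intro f hf; simp at hf
  | cons a p ih =>
    intro f hf
    rw [Walk.edges_cons, List.mem_cons] at hf
    rcases hf with hf | hf
    · exact ⟨0, by simp [Walk.length_cons], by simpa [Walk.getVert_zero, Walk.getVert_cons_succ] using hf⟩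
    · obtain ⟨i, hi, hfi⟩ := ih f hf
      exact ⟨i + 1, by simp [Walk.length_cons]; omega, by simpa [Walk.getVert_cons_succ] using hfi⟩




variable {V : Type*} {G : SimpleGraph V} {g0 : ℤ → V}

def arcW (hadj : ∀ i : ℤ, G.Adj (g0 i) (g0 (i + 1))) : (L : ℕ) → (i : ℤ) → G.Walk (g0 i) (g0 (i + L))
  | 0, i => Walk.nil.copy rfl (by norm_num)
  | (L+1), i => ((arcW hadj L (i+1)).cons (hadj i)).copy rfl (by congr 1; push_cast; ring)

variable (hadj : ∀ i : ℤ, G.Adj (g0 i) (g0 (i + 1)))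

@[simp] lemma arcW_length : ∀ (L : ℕ) (i : ℤ), (arcW hadj L i).length = L := by
  intro L
  induction L with
  | zero => intro i; simp [arcW]
  | succ L ih => intro i; simp [arcW, ih]

lemma arcW_support : ∀ (L : ℕ) (i : ℤ),
    (arcW hadj L i).support = (List.range (L+1)).map (fun j : ℕ => g0 (i + j)) := by
  intro L
  induction L with
  | zero => intro i; simp [arcW, List.range_succ]
  | succ L ih =>
    intro i
    rw [show L + 1 + 1 = (L+1) + 1 from rfl, List.range_succ_eq_map]
    simp only [arcW, Walk.support_copy, Walk.support_cons, ih, List.map_cons, List.map_map]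
    refine List.cons_eq_cons.mpr ⟨by norm_num, ?_⟩
    apply List.map_congr_left
    intro j _
    simp only [Function.comp]
    congr 1
    push_cast
    ring




def shiftSet (c : ℤ → Prop) : AddSubgroup ℤ where
  carrier := {z | ∀ x, c (x + z) ↔ c x}
  zero_mem' := by intro x; simp
  add_mem' := by
    intro a b ha hb x
    rw [← add_assoc]
    exact (hb (x + a)).trans (ha x)
  neg_mem' := by
    intro a ha x
    have := ha (x + -a)
    simp only [neg_add_cancel_right] at this
    exact this.symm

lemma mem_shiftSet {c : ℤ → Prop} {z : ℤ} : z ∈ shiftSet c ↔ ∀ x, c (x + z) ↔ c x := Iff.rfl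

theorem zkey (c : ℤ → Prop) (n p q r s : ℤ)
    (hnpq : n = p + q) (hp2 : 2 ≤ p) (hq2 : 2 ≤ q)
    (hr1 : 1 ≤ r) (hrn : r ≤ n - 1)
    (hPer : ∀ x, c (x + n) ↔ c x)
    (hCyc : ∀ x, c (x + r) ↔ c x)
    (hF1 : r ≤ q → ∀ k m : ℤ, 0 ≤ k → 0 ≤ m → k + m = r - 1 → (c (s - k) ↔ c (s + p + m)))
    (hF5 : r ≤ p → ∀ k m : ℤ, 0 ≤ k → 0 ≤ m → k + m = r - 1 → (c (s + p - k) ↔ c (s + n + m)))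
    (hF3 : ∀ k m : ℤ, 0 ≤ k → k ≤ p - 1 → 0 ≤ m → m ≤ q - 1 → k + m = r - 1 →
      (c (s + k) ↔ c (s + p + m)))
    (hF4 : ∀ k m : ℤ, 0 ≤ k → k ≤ q - 1 → 0 ≤ m → m ≤ p - 1 → k + m = r - 1 →
      (c (s - k) ↔ c (s + p - m)))
    (hnc : (∃ x, c x) ∧ (∃ y, ¬ c y)) :
    (∀ i j : ℤ, 2 ∣ (i - j) → (c i ↔ c j)) ∧ (∀ i, ¬ (c i ↔ c (i + 1))) ∧ ¬ (2 ∣ p) := by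
  set S := shiftSet c with hS
  have hnS : n ∈ S := hPer
  have hrS : r ∈ S := hCyc
  have hdvdS : ∀ z ∈ S, ∀ w, z ∣ w → w ∈ S := by
    intro z hz w hw
    obtain ⟨u, rfl⟩ := hw
    have := AddSubgroup.zsmul_mem S hz u
    simpa [zsmul_eq_mul, mul_comm] using this
  have heqv : ∀ {x y : ℤ}, x - y ∈ S → (c x ↔ c y) := by
    intro x y hxy
    have := hxy y
    simpa using this
  -- gcd of r and n
  set d : ℤ := (Int.gcd r n : ℤ) with hd
  have hdS : d ∈ S := by
    have h1 := AddSubgroup.zsmul_mem S hrS (Int.gcdA r n)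
    have h2 := AddSubgroup.zsmul_mem S hnS (Int.gcdB r n)
    have := add_mem h1 h2
    rw [hd, Int.gcd_eq_gcd_ab]
    simpa [zsmul_eq_mul, mul_comm] using this
  have hd1 : 1 ≤ d := by
    have : Int.gcd r n ≠ 0 := by
      simp only [ne_eq, Int.gcd_eq_zero_iff, not_and]
      intro h; omega
    omega
  have hdr : d ∣ r := Int.gcd_dvd_left r n
  have hdn : d ∣ n := Int.gcd_dvd_right r n
  -- extension lemma: a window of length ≥ e of T-shift relations gives T ∈ S
  have ext : ∀ e a T K : ℤ, e ∈ S → 1 ≤ e → e ≤ K →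
      (∀ k, 0 ≤ k → k ≤ K - 1 → (c (a + k) ↔ c (a + k + T))) → T ∈ S := by
    intro e a T K heS he1 heK hrel x
    set k := (x - a) % e with hk
    have hk0 : 0 ≤ k := Int.emod_nonneg _ (by omega)
    have hkl : k < e := Int.emod_lt_of_pos _ (by omega)
    have hdiff : x - (a + k) = e * ((x - a) / e) := by
      rw [hk]
      have := Int.mul_ediv_add_emod (x - a) e
      linarith
    have h1 : c x ↔ c (a + k) := heqv (hdvdS e heS _ ⟨_, hdiff⟩)
    have h2 := hrel k hk0 (by omega)
    have h3 : c (a + k + T) ↔ c (x + T) := by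
      refine heqv (hdvdS e heS _ ⟨-((x - a) / e), ?_⟩)
      have := Int.mul_ediv_add_emod (x - a) e
      rw [mul_neg]
      linarith [hdiff]
    exact (((h1.trans h2).trans h3).symm : c (x + T) ↔ c x)
  -- shifts from families F1 and F5
  have hPm1 : r ≤ q → p - 1 ∈ S := by
    intro hrq
    have hT : p + r - 1 ∈ S := by
      refine ext d (s - (r - 1)) (p + r - 1) r hdS hd1 (Int.le_of_dvd (by omega) hdr) ?_
      intro k hk0 hk1
      have := hF1 hrq (r - 1 - k) k (by omega) hk0 (by omega)
      convert this using 2 <;> omega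
    have := sub_mem hT hrS
    rwa [show p + r - 1 - r = p - 1 by ring] at this
  have hPp1 : r ≤ p → p + 1 ∈ S := by
    intro hrp
    have hT : q + r - 1 ∈ S := by
      refine ext d (s + p - (r - 1)) (q + r - 1) r hdS hd1 (Int.le_of_dvd (by omega) hdr) ?_
      intro k hk0 hk1
      have := hF5 hrp (r - 1 - k) k (by omega) hk0 (by omega)
      convert this using 2 <;> omega
    have h1 : q - 1 ∈ S := by
      have := sub_mem hT hrS
      rwa [show q + r - 1 - r = q - 1 by ring] at this
    have := sub_mem hnS h1
    rwa [show n - (q - 1) = p + 1 by rw [hnpq]; ring] at this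
  -- combination of two reflections
  have comb : ∀ e σ σ' a a' K K' : ℤ, e ∈ S → 1 ≤ e → e ≤ K → e ≤ K' →
      (σ - σ' + 2) ∈ S →
      (∀ u, a ≤ u → u ≤ a + K - 1 → (c u ↔ c (σ - u))) →
      (∀ u, a' ≤ u → u ≤ a' + K' - 1 → (c u ↔ c (σ' - u))) →
      (2 : ℤ) ∈ S := by
    intro e σ σ' a a' K K' heS he1 heK heK' hσ R1 R2 x
    set u1 := a + (x - a) % e with hu1
    have h10 : 0 ≤ (x - a) % e := Int.emod_nonneg _ (by omega)
    have h1l : (x - a) % e < e := Int.emod_lt_of_pos _ (by omega)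
    have hxu1 : x - u1 = e * ((x - a) / e) := by
      rw [hu1]; have := Int.mul_ediv_add_emod (x - a) e; linarith
    set u2 := a' + (σ - u1 - a') % e with hu2
    have h20 : 0 ≤ (σ - u1 - a') % e := Int.emod_nonneg _ (by omega)
    have h2l : (σ - u1 - a') % e < e := Int.emod_lt_of_pos _ (by omega)
    have hσu2 : (σ - u1) - u2 = e * ((σ - u1 - a') / e) := by
      rw [hu2]; have := Int.mul_ediv_add_emod (σ - u1 - a') e; linarith
    have c1 : c x ↔ c u1 := heqv (hdvdS e heS _ ⟨_, hxu1⟩)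
    have c2 : c u1 ↔ c (σ - u1) := R1 u1 (by omega) (by omega)
    have c3 : c (σ - u1) ↔ c u2 := heqv (hdvdS e heS _ ⟨_, hσu2⟩)
    have c4 : c u2 ↔ c (σ' - u2) := R2 u2 (by omega) (by omega)
    have c5 : c (σ' - u2) ↔ c (x + 2) := by
      apply heqv
      have m1 : x - u1 ∈ S := hdvdS e heS _ ⟨_, hxu1⟩
      have m2 : (σ - u1) - u2 ∈ S := hdvdS e heS _ ⟨_, hσu2⟩
      have := neg_mem (add_mem (add_mem m1 (neg_mem m2)) hσ)
      have h7 : -(x - u1 + -(σ - u1 - u2) + (σ - σ' + 2)) = σ' - u2 - (x + 2) := by ring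
      rwa [h7] at this
    exact ((((c1.trans c2).trans c3).trans c4).trans c5).symm
  -- main case analysis : 2 ∈ S
  have h2S : (2 : ℤ) ∈ S := by
    have h2r : (2 * r) ∈ S := hdvdS r hrS _ ⟨2, by ring⟩
    rcases le_or_gt r p with hrp | hrp <;> rcases le_or_gt r q with hrq | hrq
    · -- r ≤ p, r ≤ q
      have := sub_mem (hPp1 hrp) (hPm1 hrq)
      rwa [show p + 1 - (p - 1) = 2 by ring] at this
    · -- r ≤ p, q < r
      set e : ℤ := (Int.gcd d (p + 1) : ℤ) with he
      have heS : e ∈ S := by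
        have h1 := AddSubgroup.zsmul_mem S hdS (Int.gcdA d (p + 1))
        have h2 := AddSubgroup.zsmul_mem S (hPp1 hrp) (Int.gcdB d (p + 1))
        have := add_mem h1 h2
        rw [he, Int.gcd_eq_gcd_ab]
        simpa [zsmul_eq_mul, mul_comm] using this
      have he1 : 1 ≤ e := by
        have : Int.gcd d (p + 1) ≠ 0 := by
          simp only [ne_eq, Int.gcd_eq_zero_iff, not_and]
          intro h; omega
        omega
      have heq : e ≤ q - 1 := by
        have h1 : e ∣ p + 1 := Int.gcd_dvd_right d (p + 1)
        have h2 : e ∣ n := dvd_trans (Int.gcd_dvd_left d (p + 1)) hdn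
        have h3 : e ∣ q - 1 := by
          have := dvd_sub h2 h1
          rwa [show n - (p + 1) = q - 1 by rw [hnpq]; ring] at this
        exact Int.le_of_dvd (by omega) h3
      refine comb e (2*s + p + r - 1) (2*s + p - r + 1) (s + r - q) (s - q + 1) q q heS he1
        (by omega) (by omega) (by rwa [show 2*s + p + r - 1 - (2*s + p - r + 1) + 2 = 2 * r by ring])
        ?_ ?_
      · intro u hu1 hu2
        have := hF3 (u - s) (r - 1 - (u - s)) (by omega) (by omega) (by omega) (by omega) (by ring)
        convert this using 2 <;> omega
      · intro u hu1 hu2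
        have := hF4 (s - u) (r - 1 - (s - u)) (by omega) (by omega) (by omega) (by omega) (by ring)
        convert this using 2 <;> omega
    · -- p < r, r ≤ q
      set e : ℤ := (Int.gcd d (p - 1) : ℤ) with he
      have heS : e ∈ S := by
        have h1 := AddSubgroup.zsmul_mem S hdS (Int.gcdA d (p - 1))
        have h2 := AddSubgroup.zsmul_mem S (hPm1 hrq) (Int.gcdB d (p - 1))
        have := add_mem h1 h2
        rw [he, Int.gcd_eq_gcd_ab]
        simpa [zsmul_eq_mul, mul_comm] using this
      have he1 : 1 ≤ e := by
        have : Int.gcd d (p - 1) ≠ 0 := by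
          simp only [ne_eq, Int.gcd_eq_zero_iff, not_and]
          intro h; omega
        omega
      have hep : e ≤ p - 1 := by
        have h1 : e ∣ p - 1 := Int.gcd_dvd_right d (p - 1)
        exact Int.le_of_dvd (by omega) h1
      refine comb e (2*s + p + r - 1) (2*s + p - r + 1) s (s - r + 1) p p heS he1
        (by omega) (by omega) (by rwa [show 2*s + p + r - 1 - (2*s + p - r + 1) + 2 = 2 * r by ring])
        ?_ ?_
      · intro u hu1 hu2
        have := hF3 (u - s) (r - 1 - (u - s)) (by omega) (by omega) (by omega) (by omega) (by ring)
        convert this using 2 <;> omega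
      · intro u hu1 hu2
        have := hF4 (s - u) (r - 1 - (s - u)) (by omega) (by omega) (by omega) (by omega) (by ring)
        convert this using 2 <;> omega
    · -- p < r, q < r
      have hdnr : d ≤ n - r := by
        have : d ∣ n - r := dvd_sub hdn hdr
        exact Int.le_of_dvd (by omega) this
      refine comb d (2*s + p + r - 1) (2*s + p - r + 1) (s + r - q) (s - q + 1) (n - r) (n - r)
        hdS hd1 hdnr hdnr
        (by rwa [show 2*s + p + r - 1 - (2*s + p - r + 1) + 2 = 2 * r by ring])
        ?_ ?_
      · intro u hu1 hu2
        have := hF3 (u - s) (r - 1 - (u - s)) (by omega) (by omega) (by omega) (by omega) (by ring)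
        convert this using 2 <;> omega
      · intro u hu1 hu2
        have := hF4 (s - u) (r - 1 - (s - u)) (by omega) (by omega) (by omega) (by omega) (by ring)
        convert this using 2 <;> omega
  -- conclusions
  have E0 : ∀ i j : ℤ, 2 ∣ (i - j) → (c i ↔ c j) := by
    intro i j hij
    exact heqv (hdvdS 2 h2S _ hij)
  have E1 : ∀ i, ¬ (c i ↔ c (i + 1)) := by
    intro i hii
    obtain ⟨⟨x, hx⟩, ⟨y, hy⟩⟩ := hnc
    have hconst : ∀ z, c z ↔ c i := by
      intro z
      rcases Int.even_or_odd (z - i) with hparity | hparity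
      · exact E0 z i hparity.two_dvd
      · have h1 : 2 ∣ (z - (i + 1)) := by
          obtain ⟨w, hw⟩ := hparity
          exact ⟨w, by omega⟩
        exact (E0 z (i + 1) h1).trans hii.symm
    exact hy ((hconst y).mpr ((hconst x).mp hx))
  have E2 : 2 ∣ r := by
    by_contra h2r
    have h1 : 2 ∣ (r - 1) := by omega
    have h2 : c (0 + r) ↔ c 0 := hCyc 0
    have h3 : c r ↔ c 1 := E0 r 1 (by omega)
    exact E1 0 ((h3.symm.trans (by rwa [zero_add] at h2)).symm)
  refine ⟨E0, E1, ?_⟩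
  intro h2p
  set k0 : ℤ := max 0 (r - q) with hk0
  have hF3inst := hF3 k0 (r - 1 - k0) (by omega) (by omega) (by omega) (by omega) (by ring)
  have hEven : 2 ∣ ((s + p + (r - 1 - k0)) - (s + k0 + 1)) := by
    obtain ⟨w1, hw1⟩ := h2p
    obtain ⟨w2, hw2⟩ := E2
    exact ⟨w1 + w2 - k0 - 1, by omega⟩
  have := (hF3inst.trans (E0 _ (s + k0 + 1) hEven))
  exact E1 (s + k0) this


end ThetaAux

/-- A theta graph: a Hamiltonian cycle (a cycle passing through all vertices)
together with exactly one additional edge, which joins two vertices that are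
non-consecutive on the cycle (i.e. it is not an edge of the cycle). -/
def IsThetaGraph {V : Type*} [Fintype V] [DecidableEq V] (G : SimpleGraph V) : Prop :=
  ∃ (v : V) (c : G.Walk v v), c.IsHamiltonianCycle ∧
    ∃ e : Sym2 V, e ∉ c.edges ∧ G.edgeSet = {f | f ∈ c.edges} ∪ {e}

theorem stmt_4 {V : Type*} [Fintype V] [DecidableEq V] (G : SimpleGraph V)
    (hθ : IsThetaGraph G) (A B : Set V)
    (hAB : A ∪ B = Set.univ) (hdisj : Disjoint A B)
    (hA : A.Nonempty) (hB : B.Nonempty)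
    (hnotbip : ¬ ∀ x y : V, G.Adj x y →
      (x ∈ A ∧ y ∈ B) ∨ (x ∈ B ∧ y ∈ A)) :
    ∀ r : ℕ, 1 ≤ r → r < Fintype.card V →
      ∃ (a b : V) (p : G.Walk a b), p.IsPath ∧ p.length = r ∧ a ∈ A ∧ b ∈ B := by
  classical
  obtain ⟨v, cyc, ham, e, he, hE⟩ := hθ
  intro r hr1 hrn
  by_contra Hcon
  set n : ℕ := Fintype.card V with hn
  have hlen : cyc.length = n := ham.length_eq
  have hn3 : 3 ≤ n := hlen ▸ ham.isCycle.three_le_length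
  have hnz : (0:ℤ) < (n:ℤ) := by exact_mod_cast Nat.lt_of_lt_of_le (by norm_num) hn3
  -- the indexing function around the cycle
  set g0 : ℤ → V := fun i => cyc.getVert (((i - 1) % (n:ℤ)).toNat + 1) with hg0
  have hmod : ∀ i : ℤ, 0 ≤ (i - 1) % (n:ℤ) ∧ (i - 1) % (n:ℤ) < n :=
    fun i => ⟨Int.emod_nonneg _ (by omega), Int.emod_lt_of_pos _ hnz⟩
  have hval : ∀ k : ℕ, 1 ≤ k → k ≤ n → g0 (k : ℤ) = cyc.getVert k := by
    intro k h1 h2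
    have e1 : ((k:ℤ) - 1) % (n:ℤ) = (k:ℤ) - 1 :=
      Int.emod_eq_of_lt (by omega) (by exact_mod_cast (by omega : (k:ℤ) - 1 < (n:ℤ)))
    simp only [hg0, e1]
    congr 1
    omega
  have hper : ∀ i : ℤ, g0 (i + n) = g0 i := by
    intro i
    simp only [hg0]
    congr 2
    have : i + (n:ℤ) - 1 = (i - 1) + (n:ℤ) * 1 := by ring
    rw [this, Int.add_mul_emod_self_left]
  -- the step structure of positions
  have hstep : ∀ i : ℤ, ((i:ℤ) % n = (i-1) % n + 1 ∧ (i-1) % n < n - 1) ∨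
      ((i-1) % n = (n:ℤ) - 1 ∧ i % n = 0) := by
    intro i
    have h1 := hmod i
    have hdef : (i - 1) % n = i - 1 - n * ((i-1)/n) := Int.emod_def _ _
    have hi : i = (i-1) % n + 1 + n * ((i-1)/n) := by omega
    rcases lt_or_eq_of_le (by omega : (i-1) % n ≤ (n:ℤ) - 1) with hlt | heq
    · left
      refine ⟨?_, hlt⟩
      conv_lhs => rw [hi]
      rw [Int.add_mul_emod_self_left]
      exact Int.emod_eq_of_lt (by omega) (by omega)
    · right
      refine ⟨heq, ?_⟩
      conv_lhs => rw [hi, heq]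
      rw [Int.add_mul_emod_self_left]
      simp
  have hvzero : cyc.getVert n = cyc.getVert 0 := by
    rw [Walk.getVert_zero, ← hlen, Walk.getVert_length]
  have hadj : ∀ i : ℤ, G.Adj (g0 i) (g0 (i + 1)) := by
    intro i
    have hmi := hmod i
    have hmi1 := hmod (i+1)
    have hsimp : (i + 1 - 1) % (n:ℤ) = i % n := by norm_num
    rw [hsimp] at hmi1
    rcases hstep i with ⟨h1, h2⟩ | ⟨h1, h2⟩
    · have e1 : ((i + 1 - 1) % (n:ℤ)).toNat + 1 = (((i - 1) % n).toNat + 1) + 1 := by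
        rw [hsimp, h1]; omega
      simp only [hg0, e1]
      exact Walk.adj_getVert_succ _ (by rw [hlen]; omega)
    · have e1 : ((i - 1) % (n:ℤ)).toNat + 1 = n := by omega
      have e2 : ((i + 1 - 1) % (n:ℤ)).toNat + 1 = 1 := by rw [hsimp, h2]; simp
      simp only [hg0, e1, e2, hvzero]
      exact Walk.adj_getVert_succ _ (by rw [hlen]; omega)
  have htailnodup := ham.isCycle.support_nodup
  have hsuplen : cyc.support.length = n + 1 := by
    rw [Walk.length_support, hlen]
  have hgetsup : ∀ (k : ℕ) (hk : k < cyc.support.length), cyc.getVert k = cyc.support[k] :=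
    ThetaAux.getVert_support_getElem cyc
  have htl : cyc.support.tail.length = n := by
    rw [List.length_tail, hsuplen]; omega
  have hinj : ∀ i j : ℤ, g0 i = g0 j → (n:ℤ) ∣ (i - j) := by
    intro i j hij
    have hmi := hmod i
    have hmj := hmod j
    simp only [hg0] at hij
    rw [hgetsup _ (by omega), hgetsup _ (by omega)] at hij
    have key : cyc.support.tail[((i-1) % (n:ℤ)).toNat]'(by omega) =
        cyc.support.tail[((j-1) % (n:ℤ)).toNat]'(by omega) := by
      rw [List.getElem_tail, List.getElem_tail]
      exact hij
    have hnn := (htailnodup.getElem_inj_iff).mp key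
    have e2 : (i - 1) % (n:ℤ) = (j - 1) % n := by omega
    have d1 : (i-1) % (n:ℤ) = i - 1 - n * ((i-1)/n) := Int.emod_def _ _
    have d2 : (j-1) % (n:ℤ) = j - 1 - n * ((j-1)/n) := Int.emod_def _ _
    refine ⟨(i-1)/n - (j-1)/n, ?_⟩
    rw [mul_sub]
    omega
  have hsurj : ∀ w : V, ∃ k : ℕ, 1 ≤ k ∧ k ≤ n ∧ g0 (k:ℤ) = w := by
    intro w
    have hw := ham.mem_support w
    rw [List.mem_iff_getElem] at hw
    obtain ⟨m, hm, hmw⟩ := hw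
    rcases Nat.eq_zero_or_pos m with rfl | hm0
    · refine ⟨n, by omega, le_refl n, ?_⟩
      rw [hval n (by omega) (le_refl n), hvzero, hgetsup 0 (by omega)]
      exact hmw
    · refine ⟨m, hm0, by omega, ?_⟩
      rw [hval m hm0 (by omega), hgetsup m (by omega)]
      exact hmw
  -- every cycle edge is a consecutive pair, and conversely
  have hEcyc : ∀ i : ℤ, s(g0 i, g0 (i+1)) ∈ cyc.edges := by
    intro i
    have hmi := hmod i
    have hsimp : (i + 1 - 1) % (n:ℤ) = i % n := by norm_num
    rcases hstep i with ⟨h1, h2⟩ | ⟨h1, h2⟩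
    · have e1 : ((i + 1 - 1) % (n:ℤ)).toNat + 1 = (((i - 1) % n).toNat + 1) + 1 := by
        rw [hsimp, h1]; omega
      simp only [hg0, e1]
      exact ThetaAux.sq_getVert_mem_edges cyc _ (by rw [hlen]; omega)
    · have e1 : ((i - 1) % (n:ℤ)).toNat + 1 = n := by omega
      have e2 : ((i + 1 - 1) % (n:ℤ)).toNat + 1 = 1 := by rw [hsimp, h2]; simp
      simp only [hg0, e1, e2, hvzero]
      exact ThetaAux.sq_getVert_mem_edges cyc 0 (by rw [hlen]; omega)
  have hcycE : ∀ f ∈ cyc.edges, ∃ i : ℤ, f = s(g0 i, g0 (i+1)) := by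
    intro f hf
    obtain ⟨i, hi, hfi⟩ := ThetaAux.mem_edges_getVert cyc f hf
    rw [hlen] at hi
    rcases Nat.eq_zero_or_pos i with rfl | hi0
    · refine ⟨(n : ℤ), ?_⟩
      have e1 : g0 ((n:ℤ)) = cyc.getVert 0 := by
        rw [hval n (by omega) le_rfl, hvzero]
      have e2 : g0 ((n:ℤ) + 1) = cyc.getVert 1 := by
        have : ((n:ℤ) + 1) = (1:ℤ) + (n:ℤ) := by ring
        rw [this, hper]
        have h1 : ((1:ℕ):ℤ) = (1:ℤ) := by norm_num
        rw [← h1, hval 1 (by omega) (by omega)]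
      rw [e1, e2]
      simpa using hfi
    · refine ⟨(i : ℤ), ?_⟩
      have e1 : g0 ((i:ℤ)) = cyc.getVert i := hval i hi0 (by omega)
      have e2 : g0 ((i:ℤ) + 1) = cyc.getVert (i+1) := by
        have : ((i:ℤ) + 1) = ((i + 1 : ℕ) : ℤ) := by push_cast; ring
        rw [this, hval (i+1) (by omega) (by omega)]
      rw [e1, e2]
      exact hfi
  -- extract the chord
  have he' : e ∈ G.edgeSet := by rw [hE]; right; rfl
  obtain ⟨x0, y0, rfl⟩ : ∃ x y, e = s(x, y) := by
    induction e using Sym2.ind with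
    | _ a b => exact ⟨a, b, rfl⟩
  have hxyadj : G.Adj x0 y0 := G.mem_edgeSet.mp he'
  obtain ⟨sx0, hsx1, hsx2, hsx3⟩ := hsurj x0
  obtain ⟨sy0, hsy1, hsy2, hsy3⟩ := hsurj y0
  have hsxy : sx0 ≠ sy0 := by
    intro hcon
    exact hxyadj.ne (by rw [← hsx3, ← hsy3, hcon])
  -- normalize so that the chord is s(g0 sz, g0 (sz + p0)) with 1 ≤ p0, both in [1,n]
  obtain ⟨sz, p0, hsz1, hszp, he_eq, hchord0⟩ :
      ∃ (sz : ℤ) (p0 : ℤ), 1 ≤ sz ∧ 1 ≤ p0 ∧ sz + p0 ≤ n ∧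
        s(x0, y0) = s(g0 sz, g0 (sz + p0)) := by
    rcases lt_or_gt_of_ne hsxy with hlt | hgt
    · exact ⟨(sx0 : ℤ), (sy0 : ℤ) - sx0, by exact_mod_cast hsx1, by omega,
        by push_cast; omega, by rw [← hsx3, ← hsy3]; norm_num⟩
    · refine ⟨(sy0 : ℤ), (sx0 : ℤ) - sy0, by exact_mod_cast hsy1, by omega,
        by push_cast; omega, ?_⟩
      rw [← hsx3, ← hsy3]
      rw [Sym2.eq_swap]
      norm_num
  have hchordAdj : G.Adj (g0 sz) (g0 (sz + p0)) := by
    rw [hchord0] at he'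
    exact G.mem_edgeSet.mp he'
  rw [hchord0] at he
  have hp2' : 2 ≤ p0 := by
    by_contra hcon
    have hp1 : p0 = 1 := by omega
    rw [hp1] at he
    exact he (hEcyc sz)
  have hq2' : p0 ≤ (n:ℤ) - 2 := by
    by_contra hcon
    have h1 : sz = 1 ∧ p0 = (n:ℤ) - 1 := by omega
    have e1 : g0 (sz + p0) = g0 0 := by
      rw [show sz + p0 = (0:ℤ) + (n:ℤ) by omega, hper]
    have e2 : g0 sz = g0 ((0:ℤ) + 1) := by rw [h1.1]; norm_num
    rw [e1, e2, Sym2.eq_swap] at he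
    exact he (hEcyc 0)
  -- membership helpers
  have hmemB : ∀ w : V, w ∉ A → w ∈ B := by
    intro w hw
    have : w ∈ A ∪ B := by rw [hAB]; trivial
    rcases this with h | h
    · exact absurd h hw
    · exact h
  have hnotB : ∀ w : V, w ∈ A → w ∉ B := fun w hw hb => Set.disjoint_left.mp hdisj hw hb
  -- same-class from the contradiction hypothesis
  have same : ∀ (x y : ℤ) (w : G.Walk (g0 x) (g0 y)), w.IsPath → w.length = r →
      ((g0 x ∈ A) ↔ (g0 y ∈ A)) := by
    intro x y w hw hl
    constructor
    · intro hx
      by_contra hy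
      exact Hcon ⟨g0 x, g0 y, w, hw, hl, hx, hmemB _ hy⟩
    · intro hy
      by_contra hx
      exact Hcon ⟨g0 y, g0 x, w.reverse, hw.reverse, by rw [Walk.length_reverse, hl], hy,
        hmemB _ hx⟩
  -- nodup helpers
  have hnodup1 : ∀ (K : ℕ) (x : ℤ), K ≤ n →
      ((List.range K).map (fun j : ℕ => g0 (x + j))).Nodup := by
    intro K x hK
    refine List.Nodup.map_on ?_ List.nodup_range
    intro j1 h1 j2 h2 heq
    rw [List.mem_range] at h1 h2
    have hd := hinj _ _ heq
    rw [show (x + j1) - (x + j2) = (j1:ℤ) - j2 by ring] at hd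
    have habs : |(j1:ℤ) - (j2:ℤ)| < n := by rw [abs_lt]; omega
    have := Int.eq_zero_of_abs_lt_dvd hd habs
    omega
  have hdisjoint2 : ∀ (Ka Kb : ℕ) (x y : ℤ), x + Ka ≤ y → y + Kb ≤ x + n →
      List.Disjoint ((List.range Ka).map (fun j : ℕ => g0 (x + j)))
        ((List.range Kb).map (fun j : ℕ => g0 (y + j))) := by
    intro Ka Kb x y h1 h2 w hw1 hw2
    simp only [List.mem_map, List.mem_range] at hw1 hw2
    obtain ⟨j1, hj1, he1⟩ := hw1
    obtain ⟨j2, hj2, he2⟩ := hw2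
    have hd := hinj _ _ (he1.trans he2.symm)
    have habs : |(x + j1 : ℤ) - (y + j2)| < n := by rw [abs_lt]; omega
    have := Int.eq_zero_of_abs_lt_dvd hd habs
    omega
  -- walk families
  have genCyc : ∀ x : ℤ, (g0 (x + (r:ℤ)) ∈ A) ↔ (g0 x ∈ A) := by
    intro x
    refine (same x (x + r) (ThetaAux.arcW hadj r x) ?_ ?_).symm
    · rw [Walk.isPath_def, ThetaAux.arcW_support]
      exact hnodup1 (r+1) x (by omega)
    · simp [ThetaAux.arcW_length]
  have genF1 : ∀ (s' t' : ℤ) (k m : ℕ), G.Adj (g0 s') (g0 t') → s' + 1 ≤ t' →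
      t' + m + 1 ≤ s' - k + n → (k:ℤ) + m = (r:ℤ) - 1 →
      ((g0 (s' - k) ∈ A) ↔ (g0 (t' + m) ∈ A)) := by
    intro s' t' k m hadjST h1 h2 hkm
    refine same _ _
      (((ThetaAux.arcW hadj k (s' - k)).copy rfl (by congr 1; ring)).append
        (Walk.cons hadjST (ThetaAux.arcW hadj m t'))) ?_ ?_
    · rw [Walk.isPath_def]
      simp only [Walk.support_append, Walk.support_copy, Walk.support_cons,
        ThetaAux.arcW_support, List.tail_cons]
      rw [List.nodup_append]
      exact ⟨hnodup1 (k+1) (s' - k) (by omega), hnodup1 (m+1) t' (by omega),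
        fun a ha b hb hab => hdisjoint2 (k+1) (m+1) (s' - k) t' (by push_cast; omega) (by push_cast; omega) ha (by rw [hab]; exact hb)⟩
    · simp only [Walk.length_append, Walk.length_copy, Walk.length_cons,
        ThetaAux.arcW_length]
      omega
  have genF3 : ∀ (s' t' : ℤ) (k m : ℕ), G.Adj (g0 s') (g0 t') → s' + k + 1 ≤ t' →
      t' + m + 1 ≤ s' + n → (k:ℤ) + m = (r:ℤ) - 1 →
      ((g0 (s' + k) ∈ A) ↔ (g0 (t' + m) ∈ A)) := by
    intro s' t' k m hadjST h1 h2 hkm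
    refine same _ _
      (((ThetaAux.arcW hadj k s').reverse).append
        (Walk.cons hadjST (ThetaAux.arcW hadj m t'))) ?_ ?_
    · rw [Walk.isPath_def]
      simp only [Walk.support_append, Walk.support_reverse, Walk.support_cons,
        ThetaAux.arcW_support, List.tail_cons]
      rw [List.nodup_append]
      refine ⟨List.nodup_reverse.mpr (hnodup1 (k+1) s' (by omega)),
        hnodup1 (m+1) t' (by omega), ?_⟩
      intro a ha b hb hab
      exact hdisjoint2 (k+1) (m+1) s' t' (by push_cast; omega) (by push_cast; omega)
        (List.mem_reverse.mp ha) (by rw [hab]; exact hb)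
    · simp only [Walk.length_append, Walk.length_reverse, Walk.length_cons,
        ThetaAux.arcW_length]
      omega
  have genF4 : ∀ (s' t' : ℤ) (k m : ℕ), G.Adj (g0 s') (g0 t') → s' + 1 ≤ t' - m →
      t' + 1 ≤ s' - k + n → (k:ℤ) + m = (r:ℤ) - 1 →
      ((g0 (s' - k) ∈ A) ↔ (g0 (t' - m) ∈ A)) := by
    intro s' t' k m hadjST h1 h2 hkm
    refine same _ _
      (((ThetaAux.arcW hadj k (s' - k)).copy rfl (by congr 1; ring)).append
        (Walk.cons hadjST
          (((ThetaAux.arcW hadj m (t' - m)).copy rfl (by congr 1; ring)).reverse))) ?_ ?_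
    · rw [Walk.isPath_def]
      simp only [Walk.support_append, Walk.support_copy, Walk.support_cons,
        Walk.support_reverse, ThetaAux.arcW_support, List.tail_cons]
      rw [List.nodup_append]
      refine ⟨hnodup1 (k+1) (s' - k) (by omega),
        List.nodup_reverse.mpr (hnodup1 (m+1) (t' - m) (by omega)), ?_⟩
      intro a ha b hb hab
      exact hdisjoint2 (k+1) (m+1) (s' - k) (t' - m) (by push_cast; omega)
        (by push_cast; omega) ha (List.mem_reverse.mp (by rw [hab]; exact hb))
    · simp only [Walk.length_append, Walk.length_copy, Walk.length_cons,
        Walk.length_reverse, ThetaAux.arcW_length]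
      omega
  -- apply the combinatorial key lemma
  obtain ⟨E0, E1, E3⟩ := ThetaAux.zkey (fun i => g0 i ∈ A) (n:ℤ) p0 ((n:ℤ) - p0) (r:ℤ) sz
    (by ring) hp2' (by omega) (by omega) (by omega)
    (fun x => by beta_reduce; rw [hper x])
    genCyc
    (by -- hF1
      intro hrq k m hk hm hkm
      beta_reduce
      have := genF1 sz (sz + p0) k.toNat m.toNat hchordAdj (by omega)
        (by push_cast; omega) (by push_cast; omega)
      rw [show sz - k = sz - ((k.toNat : ℤ)) by omega,
        show sz + p0 + m = (sz + p0) + ((m.toNat : ℤ)) by omega]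
      exact this)
    (by -- hF5
      intro hrp k m hk hm hkm
      beta_reduce
      have hchord' : G.Adj (g0 (sz + p0)) (g0 (sz + (n:ℤ))) := by
        rw [hper sz]
        exact hchordAdj.symm
      have := genF1 (sz + p0) (sz + (n:ℤ)) k.toNat m.toNat hchord' (by omega)
        (by push_cast; omega) (by push_cast; omega)
      rw [show sz + p0 - k = (sz + p0) - ((k.toNat : ℤ)) by omega,
        show sz + (n:ℤ) + m = (sz + (n:ℤ)) + ((m.toNat : ℤ)) by omega]
      exact this)
    (by -- hF3
      intro k m hk hkp hm hmq hkm
      beta_reduce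
      have := genF3 sz (sz + p0) k.toNat m.toNat hchordAdj (by push_cast; omega)
        (by push_cast; omega) (by push_cast; omega)
      rw [show sz + k = sz + ((k.toNat : ℤ)) by omega,
        show sz + p0 + m = (sz + p0) + ((m.toNat : ℤ)) by omega]
      exact this)
    (by -- hF4
      intro k m hk hkq hm hmp hkm
      beta_reduce
      have := genF4 sz (sz + p0) k.toNat m.toNat hchordAdj (by push_cast; omega)
        (by push_cast; omega) (by push_cast; omega)
      rw [show sz - k = sz - ((k.toNat : ℤ)) by omega,
        show sz + p0 - m = (sz + p0) - ((m.toNat : ℤ)) by omega]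
      exact this)
    (by -- nonconstant
      obtain ⟨a, ha⟩ := hA
      obtain ⟨b, hb⟩ := hB
      obtain ⟨ka, _, _, hka⟩ := hsurj a
      obtain ⟨kb, _, _, hkb⟩ := hsurj b
      refine ⟨⟨(ka:ℤ), by beta_reduce; rw [hka]; exact ha⟩, ⟨(kb:ℤ), ?_⟩⟩
      intro hcon
      beta_reduce at hcon
      rw [hkb] at hcon
      exact hnotB _ hcon hb)
  -- final contradiction with non-bipartiteness
  apply hnotbip
  have crossAB : ∀ u w : V, ¬((u ∈ A) ↔ (w ∈ A)) → (u ∈ A ∧ w ∈ B) ∨ (u ∈ B ∧ w ∈ A) := by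
    intro u w hniff
    by_cases hu : u ∈ A
    · left
      exact ⟨hu, hmemB _ fun hw => hniff ⟨fun _ => hw, fun _ => hu⟩⟩
    · right
      refine ⟨hmemB _ hu, ?_⟩
      by_contra hw
      exact hniff ⟨fun h => (hu h).elim, fun h => (hw h).elim⟩
  intro x y hxy
  have hmem : s(x, y) ∈ G.edgeSet := G.mem_edgeSet.mpr hxy
  rw [hE] at hmem
  have hcross : ∃ i j : ℤ, (x = g0 i ∧ y = g0 j ∨ x = g0 j ∧ y = g0 i) ∧
      ¬((g0 i ∈ A) ↔ (g0 j ∈ A)) := by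
    rcases hmem with hcyc' | hch
    · obtain ⟨i, hi⟩ := hcycE _ hcyc'
      rw [Sym2.eq_iff] at hi
      exact ⟨i, i + 1, hi, E1 i⟩
    · have hi : s(x, y) = s(g0 sz, g0 (sz + p0)) :=
        (Set.mem_singleton_iff.mp hch).trans hchord0
      rw [Sym2.eq_iff] at hi
      refine ⟨sz, sz + p0, hi, ?_⟩
      intro hcon
      have h1 : ((g0 (sz + p0) ∈ A) ↔ (g0 (sz + 1) ∈ A)) :=
        E0 _ _ (by omega)
      exact E1 sz (hcon.trans h1)
  obtain ⟨i, j, hij, hniff⟩ := hcross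
  rcases hij with ⟨rfl, rfl⟩ | ⟨rfl, rfl⟩
  · exact crossAB _ _ hniff
  · exact crossAB _ _ (fun h => hniff h.symm)
end

section
/- For integers k and ℓ with 3 ≤ ℓ ≤ k, let F' be a bipartite graph containing no cycle of length ℓ whose minimum degree is at least 12·d_k(ℓ). Then every non-empty set X of vertices of F' with |X| ≤ k satisfies |∂X| > 2|X|, where ∂X is the set of vertices of F' outside X having at least one neighbor in X. -/
open SimpleGraph Finset


/-- `G` contains a cycle with exactly `m` vertices (equivalently, `m` edges). -/
def HasCycleOfLength {V : Type*} (G : SimpleGraph V) (m : ℕ) : Prop :=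
  ∃ (v : V) (c : G.Walk v v), c.IsCycle ∧ c.length = m

/-- The average degree `2e(G)/|V(G)|` of a finite graph. -/
noncomputable def avgDeg {V : Type*} [Fintype V] (G : SimpleGraph V) : ℝ :=
  2 * (G.edgeSet.ncard : ℝ) / (Fintype.card V)

/-- `d_k(ℓ)`: the largest possible average degree of a bipartite `C_ℓ`-free
graph on `k` vertices. -/
noncomputable def maxBipCFreeAvgDeg (k ℓ : ℕ) : ℝ :=
  sSup {x : ℝ | ∃ G : SimpleGraph (Fin k),
    G.Colorable 2 ∧ ¬ HasCycleOfLength G ℓ ∧ x = avgDeg G}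

/-- `∂X`: the set of vertices not in `X` with at least one neighbor in `X`. -/
def vertexBoundary {V : Type*} (G : SimpleGraph V) (X : Set V) : Set V :=
  {v | v ∉ X ∧ ∃ x ∈ X, G.Adj v x}

section Aux

variable {V W : Type*}

lemma walk_support_mem_of_adj_imp {G : SimpleGraph V} {R : Set V}
    (hadj : ∀ a b, G.Adj a b → a ∈ R ∧ b ∈ R) {u v : V} (p : G.Walk u v) :
    ∀ x ∈ p.support, x ∈ R ∨ x = v := by
  induction p with
  | nil => intro x hx; simp at hx; exact Or.inr hx
  | cons h q ih =>
    intro x hx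
    rcases List.mem_cons.mp (by simpa using hx) with rfl | hx
    · exact Or.inl (hadj _ _ h).1
    · exact ih x hx

lemma isCycle_map_of_injOn {G : SimpleGraph V} {H : SimpleGraph W} (f : G →g H)
    {u : V} {p : G.Walk u u} (hp : p.IsCycle)
    (hinj : Set.InjOn f {x | x ∈ p.support}) : (p.map f).IsCycle := by
  rw [SimpleGraph.Walk.isCycle_def] at hp ⊢
  obtain ⟨ht, hnil, hnd⟩ := hp
  refine ⟨?_, by simpa using hnil, ?_⟩
  · rw [SimpleGraph.Walk.isTrail_def] at ht ⊢
    rw [SimpleGraph.Walk.edges_map]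
    refine List.Nodup.map_on ?_ ht
    intro e1 he1 e2 he2 heq
    induction e1 using Sym2.ind with | _ a b => ?_
    induction e2 using Sym2.ind with | _ c d => ?_
    have ha := p.fst_mem_support_of_mem_edges he1
    have hb := p.snd_mem_support_of_mem_edges he1
    have hc := p.fst_mem_support_of_mem_edges he2
    have hd := p.snd_mem_support_of_mem_edges he2
    simp only [Sym2.map_pair_eq, Sym2.eq_iff] at heq ⊢
    rcases heq with ⟨h1, h2⟩ | ⟨h1, h2⟩
    · exact Or.inl ⟨hinj ha hc h1, hinj hb hd h2⟩
    · exact Or.inr ⟨hinj ha hd h1, hinj hb hc h2⟩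
  · rw [SimpleGraph.Walk.support_map, ← List.map_tail]
    refine List.Nodup.map_on ?_ hnd
    intro x hx y hy hxy
    exact hinj (List.mem_of_mem_tail hx) (List.mem_of_mem_tail hy) hxy

lemma edgeSet_map' (f : V ↪ W) (G : SimpleGraph V) :
    (G.map f).edgeSet = Sym2.map f '' G.edgeSet := by
  ext e
  induction e using Sym2.ind with | _ a b => ?_
  simp only [SimpleGraph.mem_edgeSet, SimpleGraph.map_adj, Set.mem_image, Sym2.exists,
    Sym2.map_pair_eq, SimpleGraph.mem_edgeSet, Sym2.eq_iff]
  constructor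
  · rintro ⟨u, v, h, h1, h2⟩; exact ⟨u, v, h, Or.inl ⟨h1, h2⟩⟩
  · rintro ⟨u, v, h, ⟨h1, h2⟩ | ⟨h1, h2⟩⟩
    · exact ⟨u, v, h, h1, h2⟩
    · exact ⟨v, u, h.symm, h2, h1⟩

lemma ncard_edgeSet_map (f : V ↪ W) (G : SimpleGraph V) :
    (G.map f).edgeSet.ncard = G.edgeSet.ncard := by
  rw [edgeSet_map', Set.ncard_image_of_injective _ (Sym2.map.injective f.injective)]

lemma colorable_map {n : ℕ} [Nonempty V] (f : V ↪ W) {G : SimpleGraph V}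
    (h : G.Colorable n) : (G.map f).Colorable n := by
  obtain ⟨C⟩ := h
  refine ⟨⟨fun w => C (Function.invFun f w), ?_⟩⟩
  rintro a b ⟨-, u, v, h, rfl, rfl⟩
  simp only [Function.leftInverse_invFun f.injective u,
    Function.leftInverse_invFun f.injective v, top_adj]
  exact C.valid h

lemma not_hasCycle_map {ℓ : ℕ} [Nonempty V] (f : V ↪ W) {G : SimpleGraph V}
    (h : ¬ HasCycleOfLength G ℓ) : ¬ HasCycleOfLength (G.map f) ℓ := by
  rintro ⟨v, c, hc, hlen⟩
  have hR : ∀ a b, (G.map f).Adj a b → a ∈ Set.range f ∧ b ∈ Set.range f := by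
    rintro a b ⟨-, u, w, h, rfl, rfl⟩
    exact ⟨⟨u, rfl⟩, ⟨w, rfl⟩⟩
  have hv : v ∈ Set.range f := by
    cases c with
    | nil => exact absurd rfl hc.ne_nil
    | cons hadj q => exact (hR _ _ hadj).1
  have hsupp : ∀ x ∈ c.support, x ∈ Set.range f := by
    intro x hx
    rcases walk_support_mem_of_adj_imp hR c x hx with h | rfl
    · exact h
    · exact hv
  -- pull back along invFun f
  have hHom : ∀ a b, (G.map f).Adj a b → G.Adj (Function.invFun f a) (Function.invFun f b) := by
    rintro a b ⟨-, u, w, h, rfl, rfl⟩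
    rwa [Function.leftInverse_invFun f.injective u, Function.leftInverse_invFun f.injective w]
  let g : G.map f →g G := ⟨Function.invFun f, fun h => hHom _ _ h⟩
  have hinj : Set.InjOn g {x | x ∈ c.support} := by
    intro x hx y hy hxy
    obtain ⟨a, rfl⟩ := hsupp x hx
    obtain ⟨b, rfl⟩ := hsupp y hy
    have : Function.invFun f (f a) = Function.invFun f (f b) := hxy
    rw [Function.leftInverse_invFun f.injective a, Function.leftInverse_invFun f.injective b] at this
    rw [this]
  exact h ⟨_, c.map g, isCycle_map_of_injOn g hc hinj, by simpa using hlen⟩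

lemma handshake_ncard [Fintype V] (G : SimpleGraph V) :
    ∑ v, (G.neighborSet v).ncard = 2 * G.edgeSet.ncard := by
  classical
  have h1 : ∀ v, (G.neighborSet v).ncard = G.degree v := by
    intro v
    rw [← Nat.card_coe_set_eq, Nat.card_eq_fintype_card, card_neighborSet_eq_degree]
  have h2 : G.edgeSet.ncard = #G.edgeFinset := by
    rw [← Nat.card_coe_set_eq, Nat.card_eq_fintype_card, edgeFinset_card]
  simp only [h1, h2]
  exact G.sum_degrees_eq_twice_card_edges

/-- `m` disjoint copies of `H`. -/
def copyGraph (m : ℕ) (H : SimpleGraph W) : SimpleGraph (Fin m × W) where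
  Adj a b := a.1 = b.1 ∧ H.Adj a.2 b.2
  symm := ⟨by rintro a b ⟨h1, h2⟩; exact ⟨h1.symm, h2.symm⟩⟩
  loopless := ⟨by rintro a ⟨h1, h2⟩; exact H.irrefl h2⟩

lemma copyGraph_colorable {m n : ℕ} {H : SimpleGraph W} (h : H.Colorable n) :
    (copyGraph m H).Colorable n := by
  obtain ⟨C⟩ := h
  exact ⟨⟨fun a => C a.2, fun hab => C.valid hab.2⟩⟩

lemma copyGraph_walk_fst {m : ℕ} {H : SimpleGraph W} {a b : Fin m × W}
    (p : (copyGraph m H).Walk a b) : ∀ x ∈ p.support, x.1 = b.1 := by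
  induction p with
  | nil => intro x hx; simp at hx; rw [hx]
  | @cons u w _ h q ih =>
    intro x hx
    rcases List.mem_cons.mp (by simpa using hx) with rfl | hx
    · rw [h.1, ih w q.start_mem_support]
    · exact ih x hx

lemma copyGraph_not_hasCycle {m ℓ : ℕ} {H : SimpleGraph W}
    (h : ¬ HasCycleOfLength H ℓ) : ¬ HasCycleOfLength (copyGraph m H) ℓ := by
  rintro ⟨v, c, hc, hlen⟩
  let g : copyGraph m H →g H := ⟨Prod.snd, fun hab => hab.2⟩
  have hinj : Set.InjOn g {x | x ∈ c.support} := by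
    intro x hx y hy hxy
    have h1 : x.1 = v.1 := copyGraph_walk_fst c x hx
    have h2 : y.1 = v.1 := copyGraph_walk_fst c y hy
    exact Prod.ext (h1.trans h2.symm) hxy
  exact h ⟨v.2, c.map g, isCycle_map_of_injOn g hc hinj, by simpa using hlen⟩

lemma copyGraph_ncard_edgeSet [Fintype W] (m : ℕ) (H : SimpleGraph W) :
    (copyGraph m H).edgeSet.ncard = m * H.edgeSet.ncard := by
  have key : ∀ (a : Fin m × W),
      ((copyGraph m H).neighborSet a).ncard = (H.neighborSet a.2).ncard := by
    intro a
    have : (copyGraph m H).neighborSet a = (fun w => (a.1, w)) '' H.neighborSet a.2 := by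
      ext b
      simp only [mem_neighborSet, Set.mem_image]
      constructor
      · rintro ⟨h1, h2⟩; exact ⟨b.2, h2, by rw [h1]⟩
      · rintro ⟨w, hw, rfl⟩; exact ⟨rfl, hw⟩
    rw [this, Set.ncard_image_of_injective _ (fun x y hxy => (Prod.ext_iff.mp hxy).2)]
  have h1 := handshake_ncard (copyGraph m H)
  have h2 := handshake_ncard H
  rw [Fintype.sum_prod_type] at h1
  simp only [key] at h1
  simp only [Finset.sum_const, smul_eq_mul, h2] at h1
  rw [Finset.card_univ, Fintype.card_fin,
    show m * (2 * H.edgeSet.ncard) = 2 * (m * H.edgeSet.ncard) by ring] at h1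
  omega
lemma le_maxBip {k ℓ : ℕ} (hk : 1 ≤ k) (G : SimpleGraph (Fin k))
    (h2 : G.Colorable 2) (hf : ¬ HasCycleOfLength G ℓ) :
    avgDeg G ≤ maxBipCFreeAvgDeg k ℓ := by
  apply le_csSup
  · refine ⟨2 * (Fintype.card (Sym2 (Fin k)) : ℝ), ?_⟩
    rintro x ⟨G', -, -, rfl⟩
    have h1 : (G'.edgeSet.ncard : ℝ) ≤ Fintype.card (Sym2 (Fin k)) := by
      have := Set.ncard_le_ncard (Set.subset_univ G'.edgeSet) Set.finite_univ
      rw [Set.ncard_univ, Nat.card_eq_fintype_card] at this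
      exact_mod_cast this
    have hk' : (1 : ℝ) ≤ (Fintype.card (Fin k) : ℝ) := by
      simp only [Fintype.card_fin]; exact_mod_cast hk
    calc avgDeg G' ≤ 2 * (G'.edgeSet.ncard : ℝ) / 1 := by
          apply div_le_div_of_nonneg_left ?_ ?_ hk' <;> positivity
      _ ≤ 2 * (Fintype.card (Sym2 (Fin k)) : ℝ) := by rw [div_one]; linarith
  · exact ⟨G, h2, hf, rfl⟩

lemma two_div_le_maxBip {k ℓ : ℕ} (hk : 3 ≤ k) (hℓ : 3 ≤ ℓ) :
    2 / (k : ℝ) ≤ maxBipCFreeAvgDeg k ℓ := by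
  classical
  set a : Fin k := ⟨0, by omega⟩
  set b : Fin k := ⟨1, by omega⟩
  have hab : a ≠ b := by simp [a, b, Fin.ext_iff]
  set G : SimpleGraph (Fin k) := SimpleGraph.fromEdgeSet {s(a, b)} with hG
  have hadj : ∀ u v, G.Adj u v ↔ (u = a ∧ v = b) ∨ (u = b ∧ v = a) := by
    intro u v
    simp only [hG, SimpleGraph.fromEdgeSet_adj, Set.mem_singleton_iff, Sym2.eq_iff]
    constructor
    · rintro ⟨(⟨rfl, rfl⟩ | ⟨rfl, rfl⟩), h⟩
      · exact Or.inl ⟨rfl, rfl⟩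
      · exact Or.inr ⟨rfl, rfl⟩
    · rintro (⟨rfl, rfl⟩ | ⟨rfl, rfl⟩)
      · exact ⟨Or.inl ⟨rfl, rfl⟩, hab⟩
      · exact ⟨Or.inr ⟨rfl, rfl⟩, hab.symm⟩
  have hedge : G.edgeSet = {s(a, b)} := by
    rw [hG, SimpleGraph.edgeSet_fromEdgeSet]
    ext e
    simp only [Set.mem_diff, Set.mem_singleton_iff, Set.mem_setOf_eq]
    constructor
    · exact fun h => h.1
    · rintro rfl
      exact ⟨rfl, fun hd => hab (Sym2.mk_isDiag_iff.mp hd)⟩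
  have h2 : G.Colorable 2 := by
    refine ⟨⟨fun v => if v = a then 0 else 1, ?_⟩⟩
    intro u v huv
    rcases (hadj u v).mp huv with ⟨rfl, rfl⟩ | ⟨rfl, rfl⟩
    · simp [hab, hab.symm]
    · simp [hab, hab.symm]
  have hf : ¬ HasCycleOfLength G ℓ := by
    rintro ⟨v, c, hc, hlen⟩
    have h3 : 3 ≤ c.edges.length := by
      rw [c.length_edges, hlen]; exact hℓ
    have hmem : ∀ e ∈ c.edges, e = s(a, b) := by
      intro e he
      have := c.edges_subset_edgeSet he
      rwa [hedge, Set.mem_singleton_iff] at this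
    have hnd := hc.isTrail.edges_nodup
    have key : ∀ (l : List (Sym2 (Fin k))), l.Nodup → (∀ x ∈ l, x = s(a, b)) →
        l.length ≤ 1 := by
      intro l hl hall
      match l with
      | [] => simp
      | [x] => simp
      | x :: y :: t =>
        rw [hall x (by simp), hall y (by simp)] at hl
        simp at hl
    have := key c.edges hnd hmem
    omega
  have := le_maxBip (by omega) G h2 hf
  refine le_trans (le_of_eq ?_) this
  rw [avgDeg, hedge, Set.ncard_singleton, Fintype.card_fin]
  norm_num

variable {W : Type*}

/-- Twice the number of edges inside `s`. -/
def pairCount [Fintype W] [DecidableEq W] (H : SimpleGraph W) [DecidableRel H.Adj] (s : Finset W) : ℕ :=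
  ∑ u ∈ s, #(s ∩ H.neighborFinset u)

lemma erase_inter_nbhd [Fintype W] [DecidableEq W] (H : SimpleGraph W) [DecidableRel H.Adj]
    (s : Finset W) (v : W) : (s.erase v) ∩ H.neighborFinset v = s ∩ H.neighborFinset v := by
  rw [Finset.erase_inter, Finset.erase_eq_self]
  intro h
  exact H.irrefl ((H.mem_neighborFinset v v).mp (Finset.mem_inter.mp h).2)

lemma pairCount_erase [Fintype W] [DecidableEq W] (H : SimpleGraph W) [DecidableRel H.Adj]
    {s : Finset W} {v : W} (hv : v ∈ s) :
    pairCount H s = pairCount H (s.erase v) + 2 * #(s ∩ H.neighborFinset v) := by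
  set e := s.erase v with he
  have hvne : v ∉ e := Finset.notMem_erase v s
  have hs : s = insert v e := by rw [he, Finset.insert_erase hv]
  have hcard : ∀ u, #(s ∩ H.neighborFinset u)
      = #(e ∩ H.neighborFinset u) + (if H.Adj u v then 1 else 0) := by
    intro u
    have : s ∩ H.neighborFinset u = insert v e ∩ H.neighborFinset u := by rw [← hs]
    rw [this]
    by_cases h : H.Adj u v
    · have hvmem : v ∈ H.neighborFinset u := (H.mem_neighborFinset u v).mpr h
      rw [if_pos h, Finset.insert_inter_of_mem hvmem, Finset.card_insert_of_notMem]
      intro hmem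
      exact hvne (Finset.mem_inter.mp hmem).1
    · have hvmem : v ∉ H.neighborFinset u := fun hm =>
        h ((H.mem_neighborFinset u v).mp hm)
      rw [if_neg h, Finset.insert_inter_of_notMem hvmem, add_zero]
  have hfilter : s.filter (fun u => H.Adj u v) = s ∩ H.neighborFinset v := by
    ext x
    simp only [Finset.mem_filter, Finset.mem_inter, H.mem_neighborFinset]
    exact and_congr_right (fun _ => H.adj_comm x v)
  calc pairCount H s = ∑ u ∈ s, (#(e ∩ H.neighborFinset u) + if H.Adj u v then 1 else 0) := by
        rw [pairCount]; exact Finset.sum_congr rfl (fun u _ => hcard u)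
    _ = (∑ u ∈ s, #(e ∩ H.neighborFinset u)) + ∑ u ∈ s, (if H.Adj u v then 1 else 0) := by
        rw [Finset.sum_add_distrib]
    _ = (pairCount H e + #(e ∩ H.neighborFinset v)) + #(s ∩ H.neighborFinset v) := by
        congr 1
        · rw [hs, Finset.sum_insert hvne, add_comm, pairCount]
        · rw [← Finset.card_filter, hfilter]
    _ = pairCount H e + 2 * #(s ∩ H.neighborFinset v) := by
        rw [erase_inter_nbhd]
        ring

lemma exists_dense_subset [Fintype W] [DecidableEq W] (H : SimpleGraph W) [DecidableRel H.Adj]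
    (k : ℕ) (hk : 3 ≤ k) :
    ∀ (s : Finset W), k ≤ #s →
      ∃ t ⊆ s, #t = k ∧ pairCount H s * (k * (k - 1)) ≤ pairCount H t * (#s * (#s - 1)) := by
  intro s hs
  by_cases heq : #s = k
  · exact ⟨s, Finset.Subset.refl s, heq, by rw [heq]⟩
  · have hM : k < #s := lt_of_le_of_ne hs (fun h => heq h.symm)
    have hne : s.Nonempty := Finset.card_pos.mp (by omega)
    obtain ⟨v, hv, hmin⟩ := Finset.exists_min_image s (fun u => #(s ∩ H.neighborFinset u)) hne
    set M := #s with hMdef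
    set D := pairCount H s with hD
    set dv := #(s ∩ H.neighborFinset v) with hdv
    -- min degree times M is at most D
    have hminD : M * dv ≤ D := by
      rw [hD, pairCount, hMdef]
      calc M * dv = ∑ _u ∈ s, dv := by rw [Finset.sum_const, smul_eq_mul]
        _ ≤ ∑ u ∈ s, #(s ∩ H.neighborFinset u) := Finset.sum_le_sum (fun u hu => hmin u hu)
    have herase : D = pairCount H (s.erase v) + 2 * dv := pairCount_erase H hv
    have hcard : #(s.erase v) = M - 1 := by rw [Finset.card_erase_of_mem hv]
    obtain ⟨t, hts, htk, hineq⟩ := exists_dense_subset H k hk (s.erase v) (by omega)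
    refine ⟨t, hts.trans (Finset.erase_subset v s), htk, ?_⟩
    rw [hcard] at hineq
    -- (M-2) * D ≤ M * pairCount (erase)
    have key : (M - 2) * D ≤ M * pairCount H (s.erase v) := by
      have h2 : 2 ≤ M := by omega
      have : (M - 2) * D + 2 * D = M * D := by
        have : M - 2 + 2 = M := by omega
        calc (M - 2) * D + 2 * D = (M - 2 + 2) * D := by ring
          _ = M * D := by rw [this]
      nlinarith [herase, hminD]
    -- combine
    have step1 : (M - 2) * (D * (k * (k - 1))) ≤ M * (pairCount H (s.erase v) * (k * (k - 1))) := by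
      calc (M - 2) * (D * (k * (k - 1))) = ((M - 2) * D) * (k * (k - 1)) := by ring
        _ ≤ (M * pairCount H (s.erase v)) * (k * (k - 1)) :=
            Nat.mul_le_mul_right _ key
        _ = M * (pairCount H (s.erase v) * (k * (k - 1))) := by ring
    have step2 : M * (pairCount H (s.erase v) * (k * (k - 1)))
        ≤ M * (pairCount H t * ((M - 1) * (M - 2))) := Nat.mul_le_mul_left _ hineq
    have step3 : (M - 2) * (D * (k * (k - 1))) ≤ (M - 2) * (pairCount H t * (M * (M - 1))) := by
      refine le_trans (le_trans step1 step2) (le_of_eq ?_)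
      ring
    exact Nat.le_of_mul_le_mul_left step3 (by omega)
termination_by s => #s
decreasing_by
  rw [Finset.card_erase_of_mem hv]
  omega

lemma pairCount_induce [Fintype W] [DecidableEq W] (H : SimpleGraph W) [DecidableRel H.Adj]
    (t : Finset W) :
    2 * (H.induce (↑t : Set W)).edgeSet.ncard = pairCount H t := by
  have hdeg : ∀ (x : ↥(↑t : Set W)),
      ((H.induce (↑t : Set W)).neighborSet x).ncard = #(t ∩ H.neighborFinset x.val) := by
    intro x
    have himg : Subtype.val '' ((H.induce (↑t : Set W)).neighborSet x)
        = ↑(t ∩ H.neighborFinset x.val) := by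
      ext w
      simp only [Set.mem_image, SimpleGraph.mem_neighborSet, Finset.coe_inter,
        Set.mem_inter_iff, Finset.mem_coe, SimpleGraph.mem_neighborFinset]
      constructor
      · rintro ⟨y, hy, rfl⟩
        exact ⟨y.2, hy⟩
      · rintro ⟨hw, hadj⟩
        exact ⟨⟨w, hw⟩, hadj, rfl⟩
    have := congrArg Set.ncard himg
    rwa [Set.ncard_image_of_injective _ Subtype.val_injective, Set.ncard_coe_finset] at this
  have hh := handshake_ncard (H.induce (↑t : Set W))
  rw [← hh]
  simp only [hdeg]
  rw [pairCount, ← Finset.sum_coe_sort t (fun u => #(t ∩ H.neighborFinset u))]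
  exact (Fintype.sum_equiv (Equiv.subtypeEquivRight (fun x => by simp)) _ _ (fun x => rfl)).symm

lemma L1_small (k ℓ : ℕ) (hk : 3 ≤ k) [Fintype W] [Nonempty W] (H : SimpleGraph W)
    (h2 : H.Colorable 2) (hf : ¬ HasCycleOfLength H ℓ) (hN : Fintype.card W ≤ k) :
    (H.edgeSet.ncard : ℝ) / (Fintype.card W) ≤ maxBipCFreeAvgDeg k ℓ := by
  set N := Fintype.card W with hNdef
  have hN1 : 1 ≤ N := Fintype.card_pos
  set m := k / N with hm
  have hm1 : 1 ≤ m := (Nat.one_le_div_iff (by omega)).mpr hN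
  have hcard : Fintype.card (Fin m × W) ≤ k := by
    rw [Fintype.card_prod, Fintype.card_fin]
    exact le_trans (Nat.mul_le_mul_left m le_rfl) (Nat.div_mul_le_self k N)
  have hk2mN : k ≤ 2 * m * N := by
    have h1 : N * m + k % N = k := Nat.div_add_mod k N
    have h2 : k % N < N := Nat.mod_lt _ (by omega)
    nlinarith
  obtain ⟨f⟩ : Nonempty (Fin m × W ↪ Fin k) :=
    Function.Embedding.nonempty_of_card_le (by simpa using hcard)
  haveI : Nonempty (Fin m × W) := by
    refine ⟨(⟨0, by omega⟩, Classical.arbitrary W)⟩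
  set G : SimpleGraph (Fin k) := (copyGraph m H).map f with hG
  have hcol : G.Colorable 2 := colorable_map f (copyGraph_colorable h2)
  have hfree : ¬ HasCycleOfLength G ℓ := not_hasCycle_map f (copyGraph_not_hasCycle hf)
  have hE : G.edgeSet.ncard = m * H.edgeSet.ncard := by
    rw [hG, ncard_edgeSet_map, copyGraph_ncard_edgeSet]
  have hle := le_maxBip (by omega) G hcol hfree
  refine le_trans ?_ hle
  rw [avgDeg, hE, Fintype.card_fin]
  rw [div_le_div_iff₀ (by exact_mod_cast hN1) (by exact_mod_cast (by omega : (0:ℕ) < k))]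
  have : (H.edgeSet.ncard : ℝ) * k ≤ 2 * (m * H.edgeSet.ncard) * N := by
    have h0 : (0:ℝ) ≤ (H.edgeSet.ncard : ℝ) := by positivity
    calc (H.edgeSet.ncard : ℝ) * k ≤ (H.edgeSet.ncard : ℝ) * (2 * m * N) := by
          apply mul_le_mul_of_nonneg_left _ h0
          exact_mod_cast hk2mN
      _ = 2 * (m * H.edgeSet.ncard) * N := by push_cast; ring
  exact_mod_cast this


lemma L2_big (k ℓ : ℕ) (hk : 3 ≤ k) [Fintype W] (H : SimpleGraph W)
    (h2 : H.Colorable 2) (hf : ¬ HasCycleOfLength H ℓ) (hNk : k ≤ Fintype.card W) :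
    (2 * H.edgeSet.ncard * (k - 1) : ℕ) / ((Fintype.card W : ℝ) * ((Fintype.card W - 1 : ℕ) : ℝ))
      ≤ maxBipCFreeAvgDeg k ℓ := by
  classical
  set N := Fintype.card W with hNdef
  have hDU : pairCount H univ = 2 * H.edgeSet.ncard := by
    have h1 : ∀ u : W, #((univ : Finset W) ∩ H.neighborFinset u) = H.degree u := by
      intro u; rw [Finset.univ_inter]; rfl
    have h2' : H.edgeSet.ncard = #H.edgeFinset := by
      rw [← Nat.card_coe_set_eq, Nat.card_eq_fintype_card, edgeFinset_card]
    rw [pairCount]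
    simp only [h1, h2']
    exact H.sum_degrees_eq_twice_card_edges
  obtain ⟨t, -, htk, hineq⟩ := exists_dense_subset H k hk univ (by simpa using hNk)
  rw [hDU, Finset.card_univ, ← hNdef] at hineq
  set Ht := H.induce (↑t : Set W) with hHt
  have hcardt : Fintype.card ↥(↑t : Set W) = k := by
    rw [← Nat.card_eq_fintype_card, Nat.card_coe_set_eq, Set.ncard_coe_finset, htk]
  haveI : Nonempty ↥(↑t : Set W) := by
    rw [← Fintype.card_pos_iff, hcardt]; omega
  have hcol : Ht.Colorable 2 := Colorable.of_hom (SimpleGraph.Embedding.induce (G := H) (↑t : Set W)).toHom h2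
  have hfree : ¬ HasCycleOfLength Ht ℓ := by
    rintro ⟨v, c, hc, hlen⟩
    refine hf ⟨_, c.map (SimpleGraph.Embedding.induce (↑t : Set W)).toHom, ?_, by rw [SimpleGraph.Walk.length_map]; exact hlen⟩
    exact hc.map (SimpleGraph.Embedding.induce (G := H) (↑t : Set W)).injective
  have hpc : 2 * Ht.edgeSet.ncard = pairCount H t := pairCount_induce H t
  obtain ⟨f⟩ : Nonempty (↥(↑t : Set W) ↪ Fin k) :=
    Function.Embedding.nonempty_of_card_le (by simp [htk])
  set G : SimpleGraph (Fin k) := Ht.map f with hG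
  have hle := le_maxBip (by omega) G (colorable_map f hcol) (not_hasCycle_map f hfree)
  refine le_trans ?_ hle
  rw [avgDeg, hG, ncard_edgeSet_map, Fintype.card_fin]
  have hNpos : (0:ℝ) < (N : ℝ) * ((N - 1 : ℕ) : ℝ) := by
    have : 0 < N * (N - 1) := by
      have : 3 ≤ N := by omega
      have h1 : 1 ≤ N - 1 := by omega
      calc 0 < 1 * 1 := by norm_num
        _ ≤ N * (N - 1) := Nat.mul_le_mul (by omega) h1
    exact_mod_cast this
  rw [div_le_div_iff₀ hNpos (by exact_mod_cast (by omega : (0:ℕ) < k))]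
  have key : (2 * H.edgeSet.ncard * (k - 1)) * k ≤ (2 * Ht.edgeSet.ncard) * (N * (N - 1)) := by
    rw [hpc]
    calc (2 * H.edgeSet.ncard * (k - 1)) * k = (2 * H.edgeSet.ncard) * (k * (k - 1)) := by ring
      _ ≤ pairCount H t * (N * (N - 1)) := hineq
  exact_mod_cast key

end Aux

theorem stmt_6 (k ℓ : ℕ) (hℓ : 3 ≤ ℓ) (hk : ℓ ≤ k)
    {V : Type*} [Fintype V] (F' : SimpleGraph V)
    (hbip : F'.Colorable 2) (hfree : ¬ HasCycleOfLength F' ℓ)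
    (hmindeg : ∀ v : V, 12 * maxBipCFreeAvgDeg k ℓ ≤ ((F'.neighborSet v).ncard : ℝ)) :
    ∀ X : Set V, X.Nonempty → X.ncard ≤ k →
      2 * X.ncard < (vertexBoundary F' X).ncard := by
  classical
  intro X hXne hXk
  by_contra hcon
  push_neg at hcon
  set d := maxBipCFreeAvgDeg k ℓ with hd
  have hk3 : 3 ≤ k := le_trans hℓ hk
  have hd2k : 2 / (k : ℝ) ≤ d := two_div_le_maxBip hk3 hℓ
  have hkR : (0:ℝ) < (k:ℝ) := by exact_mod_cast (by omega : 0 < k)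
  have hdpos : 0 < d := lt_of_lt_of_le (by positivity) hd2k
  set B := vertexBoundary F' X with hB
  set Y := X ∪ B with hY
  set x := X.ncard with hx
  have hx1 : 1 ≤ x := by
    rw [hx]
    exact (Set.ncard_pos (Set.toFinite X)).mpr hXne
  set N := Y.ncard with hN
  have hNle : N ≤ 3 * x := by
    have h1 : Y.ncard ≤ X.ncard + B.ncard := Set.ncard_union_le X B
    omega
  have hXY : X ⊆ Y := Set.subset_union_left
  have hnbr : ∀ v ∈ X, F'.neighborSet v ⊆ Y \ {v} := by
    intro v hv u hu
    have hadj : F'.Adj v u := hu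
    refine ⟨?_, ?_⟩
    · by_cases hX : u ∈ X
      · exact Or.inl hX
      · exact Or.inr ⟨hX, v, hv, hadj.symm⟩
    · simp only [Set.mem_singleton_iff]
      exact fun h => F'.irrefl (h ▸ hadj)
  set H := F'.induce Y with hH
  have hcardY : Fintype.card ↥Y = N := by
    rw [← Nat.card_eq_fintype_card, Nat.card_coe_set_eq]
  haveI : Nonempty ↥Y := ⟨⟨hXne.choose, hXY hXne.choose_spec⟩⟩
  have hcolH : H.Colorable 2 := Colorable.of_hom (SimpleGraph.Embedding.induce Y).toHom hbip
  have hfreeH : ¬ HasCycleOfLength H ℓ := by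
    rintro ⟨v, c, hc, hlen⟩
    refine hfree ⟨_, c.map (SimpleGraph.Embedding.induce (G := F') Y).toHom, ?_, by rw [SimpleGraph.Walk.length_map]; exact hlen⟩
    exact hc.map (SimpleGraph.Embedding.induce (G := F') Y).injective
  have hdegX : ∀ (w : ↥Y), w.val ∈ X →
      (H.neighborSet w).ncard = (F'.neighborSet w.val).ncard := by
    intro w hw
    have himg : Subtype.val '' (H.neighborSet w) = F'.neighborSet w.val := by
      ext u
      simp only [Set.mem_image, SimpleGraph.mem_neighborSet]
      constructor
      · rintro ⟨y, hy, rfl⟩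
        exact hy
      · intro hu
        have huY : u ∈ Y := ((hnbr w.val hw) hu).1
        exact ⟨⟨u, huY⟩, hu, rfl⟩
    rw [← himg, Set.ncard_image_of_injective _ Subtype.val_injective]
  -- main counting inequality
  have main_ineq : (x : ℝ) * (12 * d) ≤ 2 * (H.edgeSet.ncard : ℝ) := by
    set S := (univ : Finset ↥Y).filter (fun w : ↥Y => w.val ∈ X) with hS
    have hcardS : #S = x := by
      rw [hS, ← Fintype.card_subtype]
      have e : {w : ↥Y // w.val ∈ X} ≃ ↥X :=
        ⟨fun w => ⟨w.1.1, w.2⟩, fun v => ⟨⟨v.1, hXY v.2⟩, v.2⟩,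
         fun w => Subtype.ext (Subtype.ext rfl), fun v => rfl⟩
      rw [Fintype.card_congr e, ← Nat.card_eq_fintype_card, Nat.card_coe_set_eq]
    have h2 : ∀ w ∈ S, 12 * d ≤ ((H.neighborSet w).ncard : ℝ) := by
      intro w hw
      have hwX := (Finset.mem_filter.mp hw).2
      rw [hdegX w hwX]
      exact hmindeg w.val
    have h3 : ∑ w ∈ S, ((H.neighborSet w).ncard : ℝ)
        ≤ ∑ w : ↥Y, ((H.neighborSet w).ncard : ℝ) := by
      apply Finset.sum_le_sum_of_subset_of_nonneg (Finset.subset_univ S)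
      intro i _ _
      positivity
    have h4 : ∑ w : ↥Y, ((H.neighborSet w).ncard : ℝ) = 2 * (H.edgeSet.ncard : ℝ) := by
      have h := handshake_ncard H
      have := congrArg (fun n : ℕ => (n : ℝ)) h
      push_cast at this
      exact this
    calc (x : ℝ) * (12 * d) = ∑ _w ∈ S, (12 * d) := by
          rw [Finset.sum_const, hcardS, nsmul_eq_mul]
      _ ≤ ∑ w ∈ S, ((H.neighborSet w).ncard : ℝ) := Finset.sum_le_sum h2
      _ ≤ 2 * (H.edgeSet.ncard : ℝ) := by rw [← h4]; exact h3
  have hN1 : 1 ≤ N := by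
    have : X.ncard ≤ Y.ncard := Set.ncard_le_ncard hXY (Set.toFinite Y)
    omega
  by_cases hNk : N ≤ k
  · -- small case: disjoint copies
    have hL1 := L1_small k ℓ hk3 H hcolH hfreeH (by rw [hcardY]; exact hNk)
    rw [hcardY] at hL1
    -- e ≥ 6 d x ≥ 2 d N  ⇒ d ≥ 2d
    have hNR : (0:ℝ) < (N : ℝ) := by exact_mod_cast hN1
    have he1 : 6 * d * (x:ℝ) ≤ (H.edgeSet.ncard : ℝ) := by linarith
    have he2 : 2 * d * (N:ℝ) ≤ (H.edgeSet.ncard : ℝ) := by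
      have h3x : (N : ℝ) ≤ 3 * (x:ℝ) := by exact_mod_cast hNle
      nlinarith
    have hEdN : (H.edgeSet.ncard : ℝ) ≤ d * (N:ℝ) := (div_le_iff₀ hNR).mp hL1
    have : 2 * d ≤ d := by nlinarith
    linarith
  · -- large case: subsampling
    push_neg at hNk
    have hL2 := L2_big k ℓ hk3 H hcolH hfreeH (by rw [hcardY]; omega)
    rw [hcardY] at hL2
    have hNR : (0:ℝ) < (N : ℝ) * ((N - 1 : ℕ) : ℝ) := by
      have : 0 < N * (N - 1) := by
        have h1 : 1 ≤ N - 1 := by omega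
        calc 0 < 1 * 1 := by norm_num
          _ ≤ N * (N - 1) := Nat.mul_le_mul (by omega) h1
      exact_mod_cast this
    -- d * (N * (N-1)) ≥ 2e(k-1) ≥ 12dx(k-1)
    have hcross : (2 * H.edgeSet.ncard * (k - 1) : ℕ) ≤ d * ((N:ℝ) * ((N - 1 : ℕ) : ℝ)) := by
      rw [← div_le_iff₀ hNR] at *
      exact hL2
    have hstep : 12 * d * (x:ℝ) * (((k : ℕ) - 1 : ℕ) : ℝ) ≤ d * ((N:ℝ) * ((N - 1 : ℕ) : ℝ)) := by
      refine le_trans ?_ hcross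
      push_cast
      have h1 : (x:ℝ) * (12 * d) ≤ 2 * (H.edgeSet.ncard:ℝ) := main_ineq
      have h2 : (0:ℝ) ≤ ((k - 1 : ℕ) : ℝ) := by positivity
      push_cast at h2 ⊢
      nlinarith
    -- conclude 4(k-1) ≤ N-1
    have hfour : 4 * (k - 1) ≤ N - 1 := by
      have h3x : (N : ℝ) ≤ 3 * (x:ℝ) := by exact_mod_cast hNle
      have hxR : (0:ℝ) < (x:ℝ) := by exact_mod_cast hx1
      have hchain : 12 * d * (x:ℝ) * (((k:ℕ) - 1 : ℕ):ℝ) ≤ d * (3 * (x:ℝ)) * (((N:ℕ) - 1 : ℕ):ℝ) := by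
        refine le_trans hstep ?_
        have hm1 : (0:ℝ) ≤ ((N - 1 : ℕ):ℝ) := by positivity
        nlinarith [mul_nonneg (mul_nonneg hdpos.le hm1) (by linarith : (0:ℝ) ≤ 3*(x:ℝ) - (N:ℝ))]
      have : 4 * (((k:ℕ) - 1 : ℕ):ℝ) ≤ (((N:ℕ) - 1 : ℕ):ℝ) := by
        have hdx : (0:ℝ) < d * (x:ℝ) := by positivity
        nlinarith
      exact_mod_cast this
    have hk3' : k = 3 := by omega
    have hx3 : x = 3 := by omega
    have hN9 : N = 9 := by omega
    subst hk3'
    have hℓ3 : ℓ = 3 := by omega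
    subst hℓ3
    -- every vertex of X is adjacent to everything else in Y
    have hfull : ∀ v ∈ X, F'.neighborSet v = Y \ {v} := by
      intro v hv
      apply Set.eq_of_subset_of_ncard_le (hnbr v hv) ?_ (Set.toFinite _)
      have h8 : (8 : ℝ) ≤ ((F'.neighborSet v).ncard : ℝ) := by
        refine le_trans ?_ (hmindeg v)
        have h23 : (2:ℝ)/3 ≤ d := by
          norm_num at hd2k
          exact hd2k
        linarith
      have h8' : 8 ≤ (F'.neighborSet v).ncard := by exact_mod_cast h8
      have hdiff : (Y \ {v}).ncard = 8 := by
        rw [Set.ncard_diff_singleton_of_mem (hXY hv)]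
        omega
      omega
    obtain ⟨a, b, c, hab, hac, hbc, hXeq⟩ := Set.ncard_eq_three.mp hx3
    have haX : a ∈ X := by rw [hXeq]; exact Set.mem_insert _ _
    have hbX : b ∈ X := by rw [hXeq]; right; exact Set.mem_insert _ _
    have hcX : c ∈ X := by rw [hXeq]; right; right; rfl
    have hadj : ∀ u ∈ X, ∀ w ∈ X, u ≠ w → F'.Adj u w := by
      intro u hu w hw huw
      have : w ∈ F'.neighborSet u := by
        rw [hfull u hu]
        exact ⟨hXY hw, fun h => huw (Set.mem_singleton_iff.mp h).symm⟩
      exact this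
    obtain ⟨C⟩ := hbip
    have h1 := C.valid (hadj a haX b hbX hab)
    have h2 := C.valid (hadj a haX c hcX hac)
    have h3 := C.valid (hadj b hbX c hcX hbc)
    have : ∀ u v : Fin 2, u ≠ v ↔ u.val ≠ v.val := by
      intro u v; exact not_iff_not.mpr (Fin.ext_iff)
    rw [this] at h1 h2 h3
    have := (C a).isLt
    have := (C b).isLt
    have := (C c).isLt
    omega
end

section
/- Let d > 0 and let G be a graph with average degree at least 2d whose vertex set is partitioned into non-empty sets L_0, L_1, …, L_t such that every edge of G joins a vertex of L_{i−1} to a vertex of L_i for some i with 1 ≤ i ≤ t. Then there exists i with 1 ≤ i ≤ t such that the number of edges of G between L_{i−1} and L_i is at least (d/2)·(|L_{i−1}| + |L_i|); that is, the bipartite subgraph formed by these edges has average degree at least d. -/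
lemma ncard_biUnion_le {α ι : Type*} [Finite α] (s : Finset ι) (f : ι → Set α) :
    (⋃ i ∈ s, f i).ncard ≤ ∑ i ∈ s, (f i).ncard := by
  classical
  induction s using Finset.induction with
  | empty => simp
  | insert _ _ h ih =>
    rw [Finset.sum_insert h, Finset.set_biUnion_insert]
    exact (Set.ncard_union_le _ _).trans (add_le_add_right ih _)

lemma sum_ncard_le {α ι : Type*} [Finite α] (s : Finset ι) (f : ι → Set α)
    (h : ∀ i ∈ s, ∀ j ∈ s, i ≠ j → Disjoint (f i) (f j)) :
    ∑ i ∈ s, (f i).ncard ≤ Nat.card α := by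
  classical
  have : ∑ i ∈ s, (f i).ncard = (⋃ i ∈ s, f i).ncard := by
    induction s using Finset.induction with
    | @insert a s' hn ih =>
      rw [Finset.sum_insert hn, Finset.set_biUnion_insert,
        Set.ncard_union_eq ?_ (Set.toFinite _) (Set.toFinite _),
        ih (fun i hi j hj => h i (Finset.mem_insert_of_mem hi) j (Finset.mem_insert_of_mem hj))]
      · exact Set.disjoint_iUnion₂_right.mpr fun i hi =>
          h a (Finset.mem_insert_self _ _) i (Finset.mem_insert_of_mem hi)
            (fun he => hn (he ▸ hi))
    | empty => simp
  rw [this, ← Set.ncard_univ]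
  exact Set.ncard_le_ncard (Set.subset_univ _) (Set.toFinite _)

/-- The set of edges of `G` with one endpoint in `A` and the other in `B`. -/
def edgesBetween {V : Type*} (G : SimpleGraph V) (A B : Set V) : Set (Sym2 V) :=
  {e | e ∈ G.edgeSet ∧ ∃ x ∈ A, ∃ y ∈ B, e = s(x, y)}

theorem stmt_9 (d : ℝ) (hd : 0 < d) {V : Type*} [Fintype V] (G : SimpleGraph V)
    (t : ℕ) (L : ℕ → Set V)
    (hne : ∀ i ≤ t, (L i).Nonempty)
    (hcover : (⋃ i ∈ Finset.range (t + 1), L i) = Set.univ)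
    (hdisj : ∀ i ≤ t, ∀ j ≤ t, i ≠ j → Disjoint (L i) (L j))
    (hedges : ∀ x y : V, G.Adj x y → ∃ i, 1 ≤ i ∧ i ≤ t ∧
      ((x ∈ L (i - 1) ∧ y ∈ L i) ∨ (x ∈ L i ∧ y ∈ L (i - 1))))
    (hdeg : 2 * d ≤ avgDeg G) :
    ∃ i, 1 ≤ i ∧ i ≤ t ∧
      (d / 2) * (((L (i - 1)).ncard : ℝ) + ((L i).ncard : ℝ)) ≤
        ((edgesBetween G (L (i - 1)) (L i)).ncard : ℝ) := by
  classical
  by_contra hcon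
  push_neg at hcon
  -- basic facts
  have hV : Nonempty V := ⟨(hne 0 (Nat.zero_le t)).choose⟩
  have hn : 0 < Fintype.card V := Fintype.card_pos
  have hn' : (0:ℝ) < (Fintype.card V : ℝ) := by exact_mod_cast hn
  set n : ℕ := Fintype.card V with hndef
  set e : ℕ := G.edgeSet.ncard with hedef
  -- d * n ≤ e
  have hde : d * n ≤ (e:ℝ) := by
    unfold avgDeg at hdeg
    rw [le_div_iff₀ hn'] at hdeg
    nlinarith
  -- edge set is covered by the bipartite pieces
  have hsub : G.edgeSet ⊆ ⋃ i ∈ Finset.Icc 1 t, edgesBetween G (L (i-1)) (L i) := by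
    intro ed hed
    induction ed with
    | h x y =>
      have hadj : G.Adj x y := hed
      obtain ⟨i, h1, h2, hc⟩ := hedges x y hadj
      refine Set.mem_iUnion₂.mpr ⟨i, Finset.mem_Icc.mpr ⟨h1, h2⟩, ?_⟩
      rcases hc with ⟨hx, hy⟩ | ⟨hx, hy⟩
      · exact ⟨hed, x, hx, y, hy, rfl⟩
      · exact ⟨hed, y, hy, x, hx, Sym2.eq_swap⟩
  have key1 : e ≤ ∑ i ∈ Finset.Icc 1 t, (edgesBetween G (L (i-1)) (L i)).ncard :=
    (Set.ncard_le_ncard hsub (Set.toFinite _)).trans (ncard_biUnion_le _ _)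
  -- sum of layer sizes is at most n
  have key2 : ∑ i ∈ Finset.range (t+1), (L i).ncard ≤ n := by
    rw [hndef, ← Nat.card_eq_fintype_card]
    exact sum_ncard_le _ _ (fun i hi j hj hij =>
      hdisj i (Nat.lt_succ_iff.mp (Finset.mem_range.mp hi)) j
        (Nat.lt_succ_iff.mp (Finset.mem_range.mp hj)) hij)
  -- consecutive-pair size sum bound
  have key3 : ∑ i ∈ Finset.Icc 1 t, ((L (i-1)).ncard + (L i).ncard) ≤ 2 * n := by
    rw [Finset.sum_add_distrib]
    have ha : ∑ i ∈ Finset.Icc 1 t, (L (i-1)).ncard ≤ n := by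
      have : ∑ i ∈ Finset.Icc 1 t, (L (i-1)).ncard
          = ∑ i ∈ Finset.range t, (L i).ncard := by
        rw [← Finset.Ico_add_one_right_eq_Icc, Finset.sum_Ico_eq_sum_range]
        simp
      rw [this]
      refine le_trans (Finset.sum_le_sum_of_subset ?_) key2
      exact Finset.range_subset_range.mpr (Nat.le_succ t)
    have hb : ∑ i ∈ Finset.Icc 1 t, (L i).ncard ≤ n := by
      refine le_trans (Finset.sum_le_sum_of_subset ?_) key2
      intro i hi
      simp only [Finset.mem_Icc] at hi
      exact Finset.mem_range.mpr (Nat.lt_succ_of_le hi.2)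
    omega
  -- case t = 0
  rcases Nat.eq_zero_or_pos t with ht0 | ht
  · subst ht0
    simp at key1
    rw [key1] at hde
    simp at hde
    nlinarith
  -- case t ≥ 1
  have hlt : (e:ℝ) < ∑ i ∈ Finset.Icc 1 t,
      (d/2) * (((L (i-1)).ncard : ℝ) + ((L i).ncard : ℝ)) := by
    calc (e:ℝ) ≤ ∑ i ∈ Finset.Icc 1 t, ((edgesBetween G (L (i-1)) (L i)).ncard : ℝ) := by
          exact_mod_cast key1
      _ < _ := by
          refine Finset.sum_lt_sum_of_nonempty (Finset.nonempty_Icc.mpr ht) ?_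
          intro i hi
          rw [Finset.mem_Icc] at hi
          exact hcon i hi.1 hi.2
  have hsum : ∑ i ∈ Finset.Icc 1 t,
      (d/2) * (((L (i-1)).ncard : ℝ) + ((L i).ncard : ℝ)) ≤ d * n := by
    rw [← Finset.mul_sum]
    have : ∑ i ∈ Finset.Icc 1 t, (((L (i-1)).ncard : ℝ) + ((L i).ncard : ℝ)) ≤ 2 * n := by
      exact_mod_cast key3
    nlinarith
  linarith
end
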